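/- For a compact Hausdorff space X, the set I_ω X of idempotent measures of finite support, i.e., measures of the form φ ↦ max_{1≤i≤n}(λᵢ + φ(xᵢ)) with λᵢ ∈ [-∞,0], max_i λᵢ = 0, xᵢ ∈ X, is dense in IX. -/

import Mathlib

open Topology

noncomputable section

def IsIdempotentMeasure {Z : Type*} [TopologicalSpace Z] (μ : C(Z, ℝ) → ℝ) : Prop :=
  μ 1 = 1 ∧ (∀ (c : ℝ) (φ : C(Z, ℝ)), μ (ContinuousMap.const Z c + φ) = c + μ φ) ∧
    ∀ φ ψ : C(Z, ℝ), μ (φ ⊔ ψ) = max (μ φ) (μ ψ)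

abbrev IM (Z : Type*) [TopologicalSpace Z] : Type _ :=
  {μ : C(Z, ℝ) → ℝ // IsIdempotentMeasure μ}

def density {Z : Type*} [TopologicalSpace Z] (μ : C(Z, ℝ) → ℝ) (z : Z) : EReal :=
  ⨅ φ : {φ : C(Z, ℝ) // φ ≤ 0 ∧ φ z = 0}, ((μ φ.1 : ℝ) : EReal)

def pushforward {X Y : Type*} [TopologicalSpace X] [TopologicalSpace Y]
    (f : C(X, Y)) (μ : C(X, ℝ) → ℝ) : C(Y, ℝ) → ℝ :=
  fun ψ => μ (ψ.comp f)

def mpComb {τ : Type*} (α : EReal) (a b : τ → ℝ) : τ → ℝ :=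
  fun t => ((α + (a t : EReal)) ⊔ ((b t : ℝ) : EReal)).toReal

def MaxPlusConvex {τ : Type*} (A : Set (τ → ℝ)) : Prop :=
  ∀ a ∈ A, ∀ b ∈ A, ∀ α : EReal, α ≤ 0 → mpComb α a b ∈ A

def projCM {T : Type*} (A : Set (T → ℝ)) (t : T) : C(A, ℝ) :=
  ⟨fun a => a.1 t, (continuous_apply t).comp continuous_subtype_val⟩

def tilde {Z : Type*} [TopologicalSpace Z] (φ : C(Z, ℝ)) : C(IM Z, ℝ) :=
  ⟨fun ν => ν.1 φ, (continuous_apply φ).comp continuous_subtype_val⟩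

theorem finitelySupported_dense {X : Type*} [TopologicalSpace X] [CompactSpace X]
    [T2Space X] :
    {μ : C(X, ℝ) → ℝ | IsIdempotentMeasure μ} ⊆
      closure {μ : C(X, ℝ) → ℝ | ∃ (n : ℕ) (x : Fin n → X) (l : Fin n → EReal),
        (∀ i, l i ≤ 0) ∧ (⨆ i, l i) = 0 ∧
        μ = fun φ => (⨆ i, (l i + (φ (x i) : EReal))).toReal} := by
  intro μ hμ
  obtain ⟨hμ1, hμc, hμs⟩ := hμ
  have hμ0 : μ 0 = 0 := by
    have h := hμc 1 0
    have h10 : ContinuousMap.const X (1:ℝ) + 0 = (1 : C(X,ℝ)) := by ext y; simp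
    rw [h10, hμ1] at h
    linarith
  have hconst : ∀ c : ℝ, μ (ContinuousMap.const X c) = c := by
    intro c
    have h := hμc c 0
    simpa [hμ0] using h
  have hmono : ∀ {φ ψ : C(X,ℝ)}, φ ≤ ψ → μ φ ≤ μ ψ := by
    intro φ ψ hle
    have h : φ ⊔ ψ = ψ := sup_eq_right.mpr hle
    have h2 := hμs φ ψ
    rw [h] at h2
    rw [h2]
    exact le_max_left _ _
  have hne : Nonempty X := by
    by_contra h
    have h10 : (1 : C(X,ℝ)) = 0 := by ext y; exact absurd ⟨y⟩ h
    rw [h10, hμ0] at hμ1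
    exact zero_ne_one hμ1
  rw [mem_closure_iff_nhds]
  intro U0 hU
  rw [nhds_pi] at hU
  obtain ⟨I, hIfin, V, hV, hVU⟩ := Filter.mem_pi.mp hU
  have hball : ∀ φ : C(X,ℝ), ∃ d > 0, Metric.ball (μ φ) d ⊆ V φ := by
    intro φ; exact Metric.mem_nhds_iff.mp (hV φ)
  choose d hd hdball using hball
  set F : Finset C(X,ℝ) := hIfin.toFinset with hF
  obtain ⟨δ, hδpos, hδle⟩ : ∃ δ > 0, ∀ φ ∈ F, δ ≤ d φ := by
    rcases F.eq_empty_or_nonempty with h | h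
    · exact ⟨1, one_pos, by simp [h]⟩
    · exact ⟨F.inf' h d, (Finset.lt_inf'_iff h).mpr fun φ _ => hd φ,
        fun φ hφ => Finset.inf'_le _ hφ⟩
  set ε : ℝ := δ/3 with hεdef
  have hεpos : 0 < ε := by positivity
  set M : ℝ := 1 + ∑ φ ∈ F, ‖φ‖ with hMdef
  have hMb : ∀ φ ∈ F, ∀ y : X, |φ y| ≤ M := by
    intro φ hφ y
    have h1 : |φ y| ≤ ‖φ‖ := by
      simpa [Real.norm_eq_abs] using (φ.norm_coe_le_norm y)
    have h2 : ‖φ‖ ≤ ∑ ψ ∈ F, ‖ψ‖ :=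
      Finset.single_le_sum (fun ψ _ => norm_nonneg ψ) hφ
    have : (0:ℝ) ≤ 1 := zero_le_one
    linarith
  -- cover
  set U : X → Set X := fun z => ⋂ φ ∈ F, φ ⁻¹' Metric.ball (φ z) ε with hUdef
  have hUopen : ∀ z, IsOpen (U z) := fun z =>
    isOpen_biInter_finset fun φ _ => Metric.isOpen_ball.preimage φ.continuous
  have hUmem : ∀ z, z ∈ U z := fun z => Set.mem_iInter₂.mpr fun φ _ => by
    simp [Metric.mem_ball, hεpos]
  have hUclose : ∀ z y, y ∈ U z → ∀ φ ∈ F, |φ y - φ z| < ε := by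
    intro z y hy φ hφ
    have := Set.mem_iInter₂.mp hy φ hφ
    simpa [Metric.mem_ball, Real.dist_eq] using this
  obtain ⟨t, ht⟩ := isCompact_univ.elim_finite_subcover U hUopen
      (fun y _ => Set.mem_iUnion.mpr ⟨y, hUmem y⟩)
  have htne : t.Nonempty := by
    obtain ⟨y0⟩ := hne
    obtain ⟨z, hz, -⟩ := Set.mem_iUnion₂.mp (ht (Set.mem_univ y0))
    exact ⟨z, hz⟩
  set n : ℕ := t.card with hndef
  have hn : 0 < n := Finset.card_pos.mpr htne
  set e := t.equivFin with hedef
  set x : Fin n → X := fun i => (e.symm i : X) with hxdef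
  have hcov : ∀ y : X, ∃ i, y ∈ U (x i) := by
    intro y
    obtain ⟨z, hz, hyz⟩ := Set.mem_iUnion₂.mp (ht (Set.mem_univ y))
    refine ⟨e ⟨z, hz⟩, ?_⟩
    have : x (e ⟨z, hz⟩) = z := by simp [hxdef]
    rwa [this]
  -- shrink
  obtain ⟨v, hvcov, hvopen, hvcl⟩ := exists_subset_iUnion_closure_subset
    isClosed_univ (fun i => hUopen (x i)) (fun y _ => Set.toFinite _)
    (fun y _ => Set.mem_iUnion.mpr (hcov y))
  -- Urysohn
  have hury : ∀ i : Fin n, ∃ p : C(X, ℝ), Set.EqOn p 0 (U (x i))ᶜ ∧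
      Set.EqOn p 1 (closure (v i)) ∧ ∀ y, p y ∈ Set.Icc (0:ℝ) 1 := by
    intro i
    exact exists_continuous_zero_one_of_isClosed (hUopen (x i)).isClosed_compl
      isClosed_closure (Set.disjoint_compl_left_iff_subset.mpr (hvcl i))
  choose p hp0 hp1 hp01 using hury
  set h : Fin n → C(X,ℝ) := fun i => p i - ContinuousMap.const X 1 with hhdef
  have hh0 : ∀ i y, h i y ≤ 0 := by
    intro i y; simp [hhdef]; exact (hp01 i y).2
  have hhm1 : ∀ i y, y ∉ U (x i) → h i y = -1 := by
    intro i y hy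
    have : p i y = 0 := hp0 i hy
    simp [hhdef, this]
  have hhK : ∀ y, ∃ i, h i y = 0 := by
    intro y
    obtain ⟨i, hi⟩ := Set.mem_iUnion.mp (hvcov (Set.mem_univ y))
    refine ⟨i, ?_⟩
    have : p i y = 1 := hp1 i (subset_closure hi)
    simp [hhdef, this]
  have hne' : (Finset.univ : Finset (Fin n)).Nonempty := ⟨⟨0, hn⟩, Finset.mem_univ _⟩
  have keysup : ∀ (c:ℝ), 0 ≤ c → ∀ ψ : C(X,ℝ),
      Finset.univ.sup' hne' (fun i => c • h i + ψ) = ψ := by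
    intro c hc ψ
    ext y
    rw [ContinuousMap.sup'_apply]
    apply le_antisymm
    · refine Finset.sup'_le _ _ fun i _ => ?_
      have h1 := mul_nonpos_of_nonneg_of_nonpos hc (hh0 i y)
      simp only [ContinuousMap.add_apply, ContinuousMap.smul_apply, smul_eq_mul]
      linarith
    · obtain ⟨i, hi⟩ := hhK y
      have : ψ y = (c • h i + ψ) y := by
        simp [hi]
      rw [this]
      exact Finset.le_sup' (fun j => (c • h j + ψ) y) (Finset.mem_univ i)
  have keyμ : ∀ (c:ℝ), 0 ≤ c → ∀ ψ : C(X,ℝ),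
      μ ψ = Finset.univ.sup' hne' (fun i => μ (c • h i + ψ)) := by
    intro c hc ψ
    conv_lhs => rw [← keysup c hc ψ]
    exact Finset.comp_sup'_eq_sup'_comp hne' μ (fun a b => (hμs a b).trans rfl)
  -- L and l
  set L : Fin n → ℕ → ℝ := fun i k => μ ((k:ℝ) • h i) with hLdef
  have hLanti : ∀ i : Fin n, ∀ {k k' : ℕ}, k ≤ k' → L i k' ≤ L i k := by
    intro i k k' hk
    refine hmono (ContinuousMap.le_def.mpr fun y => ?_)
    simp only [ContinuousMap.smul_apply, smul_eq_mul]
    exact mul_le_mul_of_nonpos_right (by exact_mod_cast hk) (hh0 i y)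
  have hL00 : ∀ i, L i 0 = 0 := by
    intro i
    have : ((0:ℕ):ℝ) • h i = 0 := by simp
    simp [hLdef, this, hμ0]
  have hL0 : ∀ i k, L i k ≤ 0 := fun i k => (hLanti i (Nat.zero_le k)).trans_eq (hL00 i)
  set l : Fin n → EReal := fun i => ⨅ k : ℕ, ((L i k : ℝ) : EReal) with hldef
  have hl_le : ∀ i k, l i ≤ ((L i k : ℝ) : EReal) := fun i k => iInf_le _ k
  have hl0 : ∀ i, l i ≤ 0 := by
    intro i
    refine (hl_le i 0).trans ?_
    rw [hL00 i]; exact le_of_eq EReal.coe_zero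
  -- pigeonhole: some l i₀ = 0
  have hLsup : ∀ k : ℕ, ∃ i, L i k = 0 := by
    intro k
    have h1 := keyμ (k:ℝ) (Nat.cast_nonneg k) 0
    have h2 : (0:ℝ) = Finset.univ.sup' hne' (fun i => L i k) := by
      simpa [hμ0] using h1
    obtain ⟨i, -, hi⟩ := Finset.exists_mem_eq_sup' hne' (fun i => L i k)
    exact ⟨i, by rw [← hi, ← h2]⟩
  choose f hf using hLsup
  obtain ⟨i₀, hi₀⟩ := Finite.exists_infinite_fiber f
  have hfib : (f ⁻¹' {i₀}).Infinite := Set.infinite_coe_iff.mp hi₀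
  have hLi₀ : ∀ k, L i₀ k = 0 := by
    intro k
    obtain ⟨k', hk', hkk'⟩ := hfib.exists_gt k
    have hfk : f k' = i₀ := hk'
    have h1 : L i₀ k' = 0 := by rw [← hfk]; exact hf k'
    have h2 := hLanti i₀ (le_of_lt hkk')
    have h3 := hL0 i₀ k
    linarith
  have hli₀ : l i₀ = 0 := by
    have hc : ∀ k : ℕ, ((L i₀ k : ℝ) : EReal) = (0 : EReal) := by
      intro k; rw [hLi₀ k]; exact EReal.coe_zero
    rw [hldef]
    simp only [hc, iInf_const]
  have hlsup : (⨆ i, l i) = 0 :=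
    le_antisymm (iSup_le fun i => hl0 i) (hli₀ ▸ le_iSup l i₀)
  -- main estimate
  obtain ⟨n₀, hn₀⟩ := exists_nat_ge (2*M)
  have hmain : ∀ φ ∈ F,
      |(⨆ i, (l i + ((φ (x i) : ℝ) : EReal))).toReal - μ φ| < δ := by
    intro φ hφ
    set S : EReal := ⨆ i, (l i + ((φ (x i) : ℝ) : EReal)) with hSdef
    have hB : ∀ i, l i + ((φ (x i) : ℝ) : EReal) ≤ ((μ φ + ε : ℝ) : EReal) := by
      intro i
      have hptw : ContinuousMap.const X (φ (x i) - ε) + ((2*n₀ : ℕ):ℝ) • h i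
          ≤ ((n₀ : ℕ):ℝ) • h i + φ := by
        refine ContinuousMap.le_def.mpr fun y => ?_
        simp only [ContinuousMap.add_apply, ContinuousMap.const_apply,
          ContinuousMap.smul_apply, smul_eq_mul]
        by_cases hy : y ∈ U (x i)
        · have h1 := abs_lt.mp (hUclose _ _ hy φ hφ)
          have h2 : ((2*n₀:ℕ):ℝ) * h i y ≤ ((n₀:ℕ):ℝ) * h i y := by
            refine mul_le_mul_of_nonpos_right ?_ (hh0 i y)
            push_cast
            have := Nat.cast_nonneg (α := ℝ) n₀
            linarith
          linarith
        · have h1 : h i y = -1 := hhm1 i y hy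
          have h2 := abs_le.mp (hMb φ hφ (x i))
          have h3 := abs_le.mp (hMb φ hφ y)
          rw [h1]
          push_cast
          linarith
      have h4 : μ (ContinuousMap.const X (φ (x i) - ε) + ((2*n₀:ℕ):ℝ) • h i)
          = (φ (x i) - ε) + L i (2*n₀) := hμc _ _
      have h5 : μ (((n₀:ℕ):ℝ) • h i + φ) ≤ μ φ := by
        refine hmono (ContinuousMap.le_def.mpr fun y => ?_)
        simp only [ContinuousMap.add_apply, ContinuousMap.smul_apply, smul_eq_mul]
        have := mul_nonpos_of_nonneg_of_nonpos (Nat.cast_nonneg (α := ℝ) n₀) (hh0 i y)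
        linarith
      have h6 := (hmono hptw).trans h5
      rw [h4] at h6
      have hreal : L i (2*n₀) + φ (x i) ≤ μ φ + ε := by linarith
      calc l i + ((φ (x i):ℝ):EReal)
          ≤ ((L i (2*n₀) : ℝ):EReal) + ((φ (x i):ℝ):EReal) :=
            add_le_add (hl_le i _) le_rfl
        _ = ((L i (2*n₀) + φ (x i) : ℝ) : EReal) := (EReal.coe_add _ _).symm
        _ ≤ ((μ φ + ε : ℝ) : EReal) := EReal.coe_le_coe_iff.mpr hreal
    have hSle : S ≤ ((μ φ + ε : ℝ) : EReal) := iSup_le hB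
    have hSge : ((φ (x i₀) : ℝ) : EReal) ≤ S := by
      have he : l i₀ + ((φ (x i₀):ℝ):EReal) = ((φ (x i₀):ℝ):EReal) := by
        rw [hli₀, zero_add]
      exact he ▸ le_iSup (fun i => l i + ((φ (x i):ℝ):EReal)) i₀
    have hSbot : S ≠ ⊥ := by
      intro hS
      exact (EReal.coe_ne_bot _) (le_bot_iff.mp (hS ▸ hSge))
    have hStop : S ≠ ⊤ := ne_top_of_le_ne_top (EReal.coe_ne_top _) hSle
    have hSR : ((S.toReal : ℝ) : EReal) = S := EReal.coe_toReal hStop hSbot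
    -- choose k i
    have hTlt : ∀ i : Fin n, ∃ kk : ℕ, ((L i kk : ℝ) : EReal)
        < (l i + ((ε:ℝ):EReal)) ⊔ ((S.toReal - φ (x i) : ℝ) : EReal) := by
      intro i
      have hlt : l i < (l i + ((ε:ℝ):EReal)) ⊔ ((S.toReal - φ (x i) : ℝ) : EReal) := by
        by_cases hbot : l i = ⊥
        · refine lt_sup_iff.mpr (Or.inr ?_)
          rw [hbot]
          exact EReal.bot_lt_coe _
        · have htop : l i ≠ ⊤ :=
            ne_top_of_le_ne_top (EReal.coe_zero ▸ EReal.coe_ne_top 0) (hl0 i)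
          refine lt_sup_iff.mpr (Or.inl ?_)
          conv_lhs => rw [← EReal.coe_toReal htop hbot]
          conv_rhs => rw [← EReal.coe_toReal htop hbot]
          rw [← EReal.coe_add]
          exact EReal.coe_lt_coe_iff.mpr (by linarith)
      exact iInf_lt_iff.mp hlt
    choose k hk using hTlt
    set m : ℕ := n₀ + Finset.univ.sup k with hmdef
    have hn₀m : n₀ ≤ m := Nat.le_add_right _ _
    have hmge : 2*M ≤ (m:ℝ) := le_trans hn₀ (by exact_mod_cast hn₀m)
    have hkm : ∀ i, k i ≤ m := fun i =>
      le_trans (Finset.le_sup (Finset.mem_univ i)) (Nat.le_add_left _ _)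
    have hA : μ φ ≤ S.toReal + 2*ε := by
      have hrep := keyμ ((2*m:ℕ):ℝ) (Nat.cast_nonneg _) φ
      rw [hrep]
      refine Finset.sup'_le _ _ fun i _ => ?_
      have hptw : ((2*m:ℕ):ℝ) • h i + φ
          ≤ ContinuousMap.const X (φ (x i) + ε) + ((m:ℕ):ℝ) • h i := by
        refine ContinuousMap.le_def.mpr fun y => ?_
        simp only [ContinuousMap.add_apply, ContinuousMap.const_apply,
          ContinuousMap.smul_apply, smul_eq_mul]
        by_cases hy : y ∈ U (x i)
        · have h1 := abs_lt.mp (hUclose _ _ hy φ hφ)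
          have h2 : ((2*m:ℕ):ℝ) * h i y ≤ ((m:ℕ):ℝ) * h i y := by
            refine mul_le_mul_of_nonpos_right ?_ (hh0 i y)
            push_cast
            have := Nat.cast_nonneg (α := ℝ) m
            linarith
          linarith
        · have h1 : h i y = -1 := hhm1 i y hy
          have h2 := abs_le.mp (hMb φ hφ (x i))
          have h3 := abs_le.mp (hMb φ hφ y)
          rw [h1]
          push_cast
          linarith
      have h4 : μ (ContinuousMap.const X (φ (x i) + ε) + ((m:ℕ):ℝ) • h i)
          = (φ (x i) + ε) + L i m := hμc _ _
      have h5 : μ (((2*m:ℕ):ℝ) • h i + φ) ≤ (φ (x i) + ε) + L i m := by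
        rw [← h4]; exact hmono hptw
      have h6 : ((L i m : ℝ):EReal)
          < (l i + ((ε:ℝ):EReal)) ⊔ ((S.toReal - φ (x i) : ℝ):EReal) :=
        lt_of_le_of_lt (EReal.coe_le_coe_iff.mpr (hLanti i (hkm i))) (hk i)
      have h8 : ((L i m + (φ (x i) + ε) : ℝ):EReal) ≤ ((S.toReal + 2*ε : ℝ):EReal) := by
        rw [EReal.coe_add]
        rcases le_total (l i + ((ε:ℝ):EReal)) (((S.toReal - φ (x i) : ℝ):EReal)) with hc | hc
        · rw [sup_eq_right.mpr hc] at h6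
          calc ((L i m :ℝ):EReal) + ((φ (x i) + ε :ℝ):EReal)
              ≤ ((S.toReal - φ (x i) : ℝ):EReal) + ((φ (x i) + ε :ℝ):EReal) :=
                add_le_add h6.le le_rfl
            _ = ((S.toReal + ε : ℝ):EReal) := by
                rw [← EReal.coe_add]
                exact congrArg Real.toEReal (by ring)
            _ ≤ ((S.toReal + 2*ε : ℝ):EReal) :=
                EReal.coe_le_coe_iff.mpr (by linarith)
        · rw [sup_eq_left.mpr hc] at h6
          have h9 : l i + ((φ (x i):ℝ):EReal) ≤ S :=
            le_iSup (fun i => l i + ((φ (x i):ℝ):EReal)) i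
          calc ((L i m :ℝ):EReal) + ((φ (x i) + ε :ℝ):EReal)
              ≤ (l i + ((ε:ℝ):EReal)) + ((φ (x i) + ε :ℝ):EReal) :=
                add_le_add h6.le le_rfl
            _ = (l i + ((φ (x i):ℝ):EReal)) + ((2*ε:ℝ):EReal) := by
                rw [EReal.coe_add]
                rw [show ((2*ε:ℝ):EReal) = ((ε:ℝ):EReal) + ((ε:ℝ):EReal) by
                  rw [← EReal.coe_add]; norm_num [two_mul]]
                abel
            _ ≤ S + ((2*ε:ℝ):EReal) := add_le_add h9 le_rfl
            _ = ((S.toReal + 2*ε : ℝ):EReal) := by rw [EReal.coe_add, hSR]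
      have h7 : L i m + (φ (x i) + ε) ≤ S.toReal + 2*ε := EReal.coe_le_coe_iff.mp h8
      linarith
    have hBreal : S.toReal ≤ μ φ + ε := by
      have h10 := EReal.toReal_le_toReal hSle hSbot (EReal.coe_ne_top _)
      simpa only [EReal.toReal_coe] using h10
    rw [abs_sub_lt_iff]
    constructor
    · linarith
    · linarith
  refine ⟨fun φ => (⨆ i, (l i + ((φ (x i) : ℝ) : EReal))).toReal,
    hVU (Set.mem_pi.mpr fun φ hφI => ?_), ⟨n, x, l, hl0, hlsup, rfl⟩⟩
  have hφF : φ ∈ F := (Set.Finite.mem_toFinset hIfin).mpr hφI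
  refine hdball φ ?_
  rw [Metric.mem_ball, Real.dist_eq]
  exact lt_of_lt_of_le (hmain φ hφF) (hδle φ hφF)
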